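/- Fix n ≥ 1 and let Q(λ) = A_n λⁿ + ⋯ + A_1 λ + A_0 be a random real polynomial whose n+1 coefficients A_0, …, A_n are i.i.d. standard normal random variables. Then for every k with 0 ≤ k ≤ n, P(N⁰(Q) = k) = P(N⁰(Q) = n − k), where N⁰(Q) is the number of complex roots of Q with modulus smaller than 1. -/

import Mathlib

open Polynomial MeasureTheory ProbabilityTheory

/-- The number of complex roots, counted with multiplicity, of a real polynomial
with modulus smaller than `1`. -/
noncomputable def smallRootCount (q : Polynomial ℝ) : ℕ :=
  Multiset.card ((q.map (algebraMap ℝ ℂ)).roots.filter fun z => ‖z‖ < 1)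

/-- The random real polynomial `∑_{i=0}^{n} ω_i λ^i` built from coefficients `ω`. -/
noncomputable def polyOfCoeffs {n : ℕ} (ω : Fin (n + 1) → ℝ) : Polynomial ℝ :=
  ∑ i : Fin (n + 1), Polynomial.C (ω i) * Polynomial.X ^ (i : ℕ)

set_option linter.unnecessarySimpa false

namespace Stmt17

lemma coeff_polyOfCoeffs {n : ℕ} (ω : Fin (n + 1) → ℝ) (j : ℕ) (hj : j ≤ n) :
    (polyOfCoeffs ω).coeff j = ω ⟨j, by omega⟩ := by
  unfold polyOfCoeffs
  rw [finset_sum_coeff]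
  rw [Finset.sum_eq_single (⟨j, by omega⟩ : Fin (n + 1))]
  · simp
  · intro b _ hb
    rw [coeff_C_mul, coeff_X_pow, if_neg, mul_zero]
    intro h
    exact hb (by ext; simp [h])
  · simp

lemma coeff_polyOfCoeffs_of_gt {n : ℕ} (ω : Fin (n + 1) → ℝ) (j : ℕ) (hj : n < j) :
    (polyOfCoeffs ω).coeff j = 0 := by
  unfold polyOfCoeffs
  rw [finset_sum_coeff]
  apply Finset.sum_eq_zero
  intro b _
  rw [coeff_C_mul, coeff_X_pow, if_neg, mul_zero]
  exact fun h => absurd (h ▸ b.isLt) (by omega)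

lemma natDegree_polyOfCoeffs_le {n : ℕ} (ω : Fin (n + 1) → ℝ) :
    (polyOfCoeffs ω).natDegree ≤ n :=
  natDegree_le_iff_coeff_eq_zero.mpr fun _ h => coeff_polyOfCoeffs_of_gt ω _ h

lemma polyOfCoeffs_rev {n : ℕ} (ω : Fin (n + 1) → ℝ) :
    polyOfCoeffs (fun i => ω (Fin.rev i)) = reflect n (polyOfCoeffs ω) := by
  ext j
  rw [coeff_reflect]
  by_cases hj : j ≤ n
  · rw [coeff_polyOfCoeffs _ j hj, revAt_le (by omega), coeff_polyOfCoeffs _ _ (by omega)]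
    congr 1
    ext
    simp [Fin.rev]
  · rw [coeff_polyOfCoeffs_of_gt _ j (by omega), revAt_eq_self_of_lt (by omega),
      coeff_polyOfCoeffs_of_gt _ j (by omega)]


lemma reflect_multiset_prod (R : Multiset ℂ) (h0 : (0:ℂ) ∉ R) :
    reflect (Multiset.card R) ((R.map fun z => X - C z).prod)
      = C ((R.map fun z => -z).prod) * ((R.map fun z => X - C z⁻¹).prod) := by
  induction R using Multiset.induction with
  | empty => simp
  | cons a R ih =>
    have ha : a ≠ 0 := fun h => h0 (by simp [h])
    have h0R : (0:ℂ) ∉ R := fun h => h0 (Multiset.mem_cons_of_mem h)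
    simp only [Multiset.map_cons, Multiset.prod_cons, Multiset.card_cons]
    have hrest : ((R.map fun z => X - C z).prod).natDegree ≤ Multiset.card R := by
      rw [natDegree_multiset_prod_X_sub_C_eq_card]
    have hlin : (X - C a).natDegree ≤ 1 := by
      simpa using natDegree_X_sub_C_le (a := a)
    have := reflect_mul (X - C a) ((R.map fun z => X - C z).prod) hlin hrest
    rw [show Multiset.card R + 1 = 1 + Multiset.card R by omega, this, ih h0R]
    have hXa : reflect 1 (X - C a) = C (-a) * (X - C a⁻¹) := by
      rw [reflect_sub, reflect_C]
      have : reflect 1 (X : ℂ[X]) = 1 := by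
        simpa using reflect_monomial 1 1 (R := ℂ)
      rw [this, pow_one, mul_sub, ← C_mul, neg_mul, mul_inv_cancel₀ ha, map_neg, map_neg,
        map_one]
      ring
    rw [hXa, C_mul]
    ring

lemma roots_reflect {Q : Polynomial ℂ} (h0 : Q.coeff 0 ≠ 0) :
    (reflect Q.natDegree Q).roots = Q.roots.map (·⁻¹) := by
  have hQ : Q ≠ 0 := fun h => h0 (by simp [h])
  have hcard : Multiset.card Q.roots = Q.natDegree :=
    splits_iff_card_roots.mp (IsAlgClosed.splits Q)
  have h0R : (0:ℂ) ∉ Q.roots := by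
    intro h
    rw [mem_roots hQ] at h
    exact h0 (by rwa [coeff_zero_eq_eval_zero])
  have hrepr := C_leadingCoeff_mul_prod_multiset_X_sub_C hcard
  have hlc : Q.leadingCoeff ≠ 0 := leadingCoeff_ne_zero.mpr hQ
  set R := Q.roots with hR
  rw [← hcard]
  conv_lhs => rw [← hrepr]
  rw [reflect_C_mul, reflect_multiset_prod R h0R]
  rw [← mul_assoc, ← C_mul]
  have hc : Q.leadingCoeff * (R.map fun z => -z).prod ≠ 0 := by
    apply mul_ne_zero hlc
    apply Multiset.prod_ne_zero
    intro h
    obtain ⟨z, hz, hz0⟩ := Multiset.mem_map.mp h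
    exact h0R (by rwa [show z = 0 by simpa using hz0.symm ▸ (neg_eq_zero.mp hz0)] at hz)
  rw [roots_C_mul _ hc]
  have : (R.map fun z => X - C z⁻¹) = ((R.map (·⁻¹)).map fun a => X - C a) := by
    rw [Multiset.map_map]
    rfl
  rw [this, roots_multiset_prod_X_sub_C]


lemma smallRootCount_reflect {q : Polynomial ℝ} {n : ℕ} (hq0 : q.coeff 0 ≠ 0)
    (hqn : q.natDegree = n)
    (hcirc : ∀ z : ℂ, ‖z‖ = 1 → ¬ (q.map (algebraMap ℝ ℂ)).IsRoot z) :
    smallRootCount (reflect n q) = n - smallRootCount q ∧ smallRootCount q ≤ n := by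
  classical
  set Q := q.map (algebraMap ℝ ℂ) with hQdef
  have hQ0 : Q.coeff 0 ≠ 0 := by
    rw [hQdef, coeff_map]
    simpa using hq0
  have hQne : Q ≠ 0 := fun h => hQ0 (by simp [h])
  have hQn : Q.natDegree = n := by
    rw [hQdef, natDegree_map, hqn]
  have hcard : Multiset.card Q.roots = n :=
    hQn ▸ splits_iff_card_roots.mp (IsAlgClosed.splits Q)
  have h0R : (0:ℂ) ∉ Q.roots := by
    intro h
    rw [mem_roots hQne] at h
    exact hQ0 (by rwa [coeff_zero_eq_eval_zero])
  have h1R : ∀ z ∈ Q.roots, ‖z‖ ≠ 1 := by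
    intro z hz h1
    rw [mem_roots hQne] at hz
    exact hcirc z h1 hz
  have hmap : (reflect n q).map (algebraMap ℝ ℂ) = reflect n Q := (reflect_map _ q n).symm
  have hroots : ((reflect n q).map (algebraMap ℝ ℂ)).roots = Q.roots.map (·⁻¹) := by
    rw [hmap, ← hQn, roots_reflect hQ0]
  have key : smallRootCount (reflect n q)
      = Multiset.card (Q.roots.filter fun z => ¬ ‖z‖ < 1) := by
    unfold smallRootCount
    rw [hroots, Multiset.filter_map, Multiset.card_map]
    congr 1
    apply Multiset.filter_congr
    intro z hz
    have hz0 : z ≠ 0 := fun h => h0R (h ▸ hz)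
    have habs : 0 < ‖z‖ := by
      simpa [AbsoluteValue.pos_iff] using hz0
    simp only [Function.comp_apply, map_inv₀, norm_inv]
    rw [inv_lt_one₀ habs]
    constructor
    · intro h1 h2; linarith
    · intro h
      rcases lt_trichotomy (‖z‖) 1 with h' | h' | h'
      · exact absurd h' h
      · exact absurd h' (h1R z hz)
      · exact h'
  have hsplit : Multiset.card (Q.roots.filter fun z => ‖z‖ < 1)
      + Multiset.card (Q.roots.filter fun z => ¬ ‖z‖ < 1) = n := by
    rw [← Multiset.card_add, Multiset.filter_add_not, hcard]
  have hsmall : smallRootCount q = Multiset.card (Q.roots.filter fun z => ‖z‖ < 1) := rfl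
  constructor
  · rw [key, hsmall]; omega
  · rw [hsmall]; omega


lemma gauss_pi_ac : ∀ (m : ℕ),
    (Measure.pi fun _ : Fin m => gaussianReal 0 1) ≪ (volume : Measure (Fin m → ℝ)) := by
  intro m
  induction m with
  | zero =>
    rw [Measure.pi_of_empty, show (volume : Measure (Fin 0 → ℝ)) = Measure.dirac isEmptyElim from
      Measure.volume_pi_eq_dirac _]
  | succ m ih =>
    have hvol : (volume : Measure (Fin (m+1) → ℝ)) = Measure.pi fun _ => volume := volume_pi
    set e := MeasurableEquiv.piFinSuccAbove (fun _ : Fin (m + 1) => ℝ) 0 with he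
    have hG := measurePreserving_piFinSuccAbove (fun _ : Fin (m + 1) => gaussianReal 0 1) 0
    have hV := measurePreserving_piFinSuccAbove (fun _ : Fin (m + 1) => (volume : Measure ℝ)) 0
    rw [hvol]
    refine Measure.AbsolutelyContinuous.mk fun s hs hs0 => ?_
    have h1 : ((volume : Measure ℝ).prod (Measure.pi fun _ : Fin m => (volume : Measure ℝ)))
        (e.symm ⁻¹' s) = 0 := by
      rw [(MeasurePreserving.symm e hV).measure_preimage hs.nullMeasurableSet]
      exact hs0
    have h2 : ((gaussianReal 0 1).prod (Measure.pi fun _ : Fin m => gaussianReal 0 1))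
        (e.symm ⁻¹' s) = 0 := by
      exact ((gaussianReal_absolutelyContinuous 0 one_ne_zero).prod ih) h1
    calc (Measure.pi fun _ : Fin (m+1) => gaussianReal 0 1) s
        = ((gaussianReal 0 1).prod (Measure.pi fun _ : Fin m => gaussianReal 0 1))
          (e.symm ⁻¹' s) := ((MeasurePreserving.symm e hG).measure_preimage hs.nullMeasurableSet).symm
      _ = 0 := h2


lemma volume_hyperplane {m : ℕ} (c : Fin m → ℝ) (j : Fin m) (hj : c j ≠ 0) :
    (volume : Measure (Fin m → ℝ)) {v | ∑ i, c i * v i = 0} = 0 := by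
  let L : (Fin m → ℝ) →ₗ[ℝ] ℝ :=
    { toFun := fun v => ∑ i, c i * v i
      map_add' := by
        intro x y
        simp [mul_add, Finset.sum_add_distrib]
      map_smul' := by
        intro r x
        simp [Finset.mul_sum]
        ring_nf
        congr 1; ext i; ring }
  have hL1 : L (Pi.single j 1) = c j := by
    show ∑ i, c i * (Pi.single j 1 : Fin m → ℝ) i = c j
    rw [Finset.sum_eq_single j]
    · simp
    · intro b _ hb; simp [Pi.single_apply, hb]
    · simp
  have hker : LinearMap.ker L ≠ ⊤ := by
    intro h
    have h0 : L (Pi.single j 1) = 0 := by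
      have : Pi.single j 1 ∈ LinearMap.ker L := h ▸ Submodule.mem_top
      simpa using this
    rw [hL1] at h0
    exact hj h0
  have := Measure.addHaar_submodule (volume : Measure (Fin m → ℝ)) (LinearMap.ker L) hker
  convert this using 1
  rfl

lemma volume_coord_zero {m : ℕ} (j : Fin m) :
    (volume : Measure (Fin m → ℝ)) {v | v j = 0} = 0 := by
  have heq : ∀ v : Fin m → ℝ, ∑ i, (Pi.single j 1 : Fin m → ℝ) i * v i = v j := by
    intro v
    rw [Finset.sum_eq_single j]
    · simp
    · intro b _ hb; simp [Pi.single_apply, hb]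
    · simp
  have h := volume_hyperplane (Pi.single j 1) j (by simp)
  simp only [heq] at h
  exact h

lemma image_null {m : ℕ} {Φ : (Fin m → ℝ) → (Fin m → ℝ)} (hΦ : Differentiable ℝ Φ)
    {s : Set (Fin m → ℝ)} (hs : (volume : Measure (Fin m → ℝ)) s = 0) :
    (volume : Measure (Fin m → ℝ)) (Φ '' s) = 0 :=
  addHaar_image_eq_zero_of_differentiableOn_of_addHaar_eq_zero
    (volume : Measure (Fin m → ℝ)) (hΦ.differentiableOn) hs


def el (n m : ℕ) (v : Fin (n + 1) → ℝ) : ℝ := if h : m < n then v ⟨m, by omega⟩ else 0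

noncomputable def Φm (n : ℕ) (v : Fin (n + 1) → ℝ) : Fin (n + 1) → ℝ := fun j =>
  el n (j : ℕ) v + (if 2 ≤ (j : ℕ) then el n ((j : ℕ) - 2) v else 0)
    - (if 1 ≤ (j : ℕ) then v (Fin.last n) * el n ((j : ℕ) - 1) v else 0)

lemma diff_el (n m : ℕ) : Differentiable ℝ (el n m) := by
  unfold el
  by_cases h : m < n
  · simp only [dif_pos h]
    exact differentiable_pi.mp differentiable_id _
  · simp only [dif_neg h]
    exact differentiable_const 0

lemma diff_Φm (n : ℕ) : Differentiable ℝ (Φm n) := by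
  rw [differentiable_pi]
  intro j
  have h1 : Differentiable ℝ fun v => el n (j : ℕ) v := diff_el n _
  have h2 : Differentiable ℝ fun v : Fin (n+1) → ℝ =>
      (if 2 ≤ (j : ℕ) then el n ((j : ℕ) - 2) v else 0) := by
    by_cases h : 2 ≤ (j : ℕ)
    · simp only [if_pos h]; exact diff_el n _
    · simp only [if_neg h]; exact differentiable_const 0
  have h3 : Differentiable ℝ fun v : Fin (n+1) → ℝ =>
      (if 1 ≤ (j : ℕ) then v (Fin.last n) * el n ((j : ℕ) - 1) v else 0) := by
    by_cases h : 1 ≤ (j : ℕ)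
    · simp only [if_pos h]
      exact (differentiable_pi.mp differentiable_id _).mul (diff_el n _)
    · simp only [if_neg h]; exact differentiable_const 0
  exact (h1.add h2).sub h3

lemma volume_bad (n : ℕ) (hn : 1 ≤ n) :
    (volume : Measure (Fin (n + 1) → ℝ))
      {ω | ω 0 = 0 ∨ ω (Fin.last n) = 0 ∨ ∃ z : ℂ, ‖z‖ = 1 ∧
        ((polyOfCoeffs ω).map (algebraMap ℝ ℂ)).IsRoot z} = 0 := by
  classical
  set S1 : Set (Fin (n+1) → ℝ) := {v | v 0 = 0} with hS1
  set S2 : Set (Fin (n+1) → ℝ) := {v | v (Fin.last n) = 0} with hS2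
  set S3 : Set (Fin (n+1) → ℝ) := {v | ∑ i, (1:ℝ) * v i = 0} with hS3
  set S4 : Set (Fin (n+1) → ℝ) := {v | ∑ i, (-1:ℝ)^(i.val) * v i = 0} with hS4
  set S5 : Set (Fin (n+1) → ℝ) := Φm n '' {v | v ⟨n - 1, by omega⟩ = 0} with hS5
  have hN : (volume : Measure (Fin (n+1) → ℝ)) (S1 ∪ S2 ∪ S3 ∪ S4 ∪ S5) = 0 := by
    have h1 := volume_coord_zero (0 : Fin (n+1))
    have h2 := volume_coord_zero (Fin.last n)
    have h3 := volume_hyperplane (fun _ : Fin (n+1) => (1:ℝ)) (0 : Fin (n+1)) one_ne_zero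
    have h4 := volume_hyperplane (fun i : Fin (n+1) => (-1:ℝ)^(i.val)) (0 : Fin (n+1)) (by simp)
    have h5 : (volume : Measure (Fin (n+1) → ℝ)) S5 = 0 :=
      image_null (diff_Φm n) (volume_coord_zero _)
    refine le_antisymm ?_ zero_le
    calc (volume : Measure (Fin (n+1) → ℝ)) (S1 ∪ S2 ∪ S3 ∪ S4 ∪ S5)
        ≤ volume S1 + volume S2 + volume S3 + volume S4 + volume S5 := by
          refine le_trans (measure_union_le _ _) ?_
          gcongr
          refine le_trans (measure_union_le _ _) ?_
          gcongr
          refine le_trans (measure_union_le _ _) ?_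
          gcongr
          exact measure_union_le _ _
      _ = 0 := by rw [h1, h2, h3, h4, h5]; simp
  refine le_antisymm (le_trans (measure_mono ?_) hN.le) zero_le
  rintro ω (h0 | hlast | ⟨z, habs, hroot⟩)
  · exact Or.inl (Or.inl (Or.inl (Or.inl h0)))
  · exact Or.inl (Or.inl (Or.inl (Or.inr hlast)))
  by_cases h0 : ω ∈ S1
  · exact Or.inl (Or.inl (Or.inl (Or.inl h0)))
  by_cases hlast : ω ∈ S2
  · exact Or.inl (Or.inl (Or.inl (Or.inr hlast)))
  rw [hS1, Set.mem_setOf_eq] at h0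
  rw [hS2, Set.mem_setOf_eq] at hlast
  set q := polyOfCoeffs ω with hq
  set Q := q.map (algebraMap ℝ ℂ) with hQ
  have hq0 : q.coeff 0 ≠ 0 := by
    rw [coeff_polyOfCoeffs ω 0 (by omega)]
    exact h0
  have hqn : q.coeff n ≠ 0 := by
    rw [coeff_polyOfCoeffs ω n le_rfl]
    exact hlast
  have hqne : q ≠ 0 := fun h => hqn (by simp [h])
  have hdeg : q.natDegree = n :=
    le_antisymm (natDegree_polyOfCoeffs_le ω) (le_natDegree_of_ne_zero hqn)
  have heval : ∀ x : ℝ, q.eval x = ∑ i : Fin (n+1), ω i * x ^ (i : ℕ) := by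
    intro x
    rw [hq]
    unfold polyOfCoeffs
    rw [eval_finset_sum]
    simp
  by_cases him : z.im = 0
  · -- z = ±1, real root
    have hzre : z = ((z.re : ℝ) : ℂ) := by
      rw [← Complex.re_add_im z, him]; simp
    have habs' : |z.re| = 1 := by
      rw [hzre] at habs
      simpa using habs
    have hqz : q.eval z.re = 0 := by
      have : Q.eval z = 0 := hroot
      rw [hzre, hQ] at this
      rw [eval_map] at this
      have h2 : ((z.re : ℝ) : ℂ) = algebraMap ℝ ℂ z.re := rfl
      rw [h2, eval₂_at_apply] at this
      simpa using this
    rcases abs_eq (by norm_num : (0:ℝ) ≤ 1) |>.mp habs' with h1 | h1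
    · have hm : ω ∈ S3 := by
        rw [hS3, Set.mem_setOf_eq]
        have := hqz
        rw [heval, h1] at this
        rw [← this]
        exact Finset.sum_congr rfl fun i _ => by ring
      exact Or.inl (Or.inl (Or.inr hm))
    · have hm : ω ∈ S4 := by
        rw [hS4, Set.mem_setOf_eq]
        have := hqz
        rw [heval, h1] at this
        rw [← this]
        exact Finset.sum_congr rfl fun i _ => by ring
      exact Or.inl (Or.inr hm)
  · -- non-real root: quadratic factor
    have hm : ω ∈ S5 := by
      have haeval : Q.eval z = 0 := hroot
      have hQeval : ∀ w : ℂ, Q.eval w = (Polynomial.aeval w) q := by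
        intro w; rw [hQ, eval_map, aeval_def]
      have hconj : Q.eval ((starRingEnd ℂ) z) = 0 := by
        rw [hQeval, Polynomial.aeval_conj, ← hQeval, haeval, map_zero]
      have hne : (starRingEnd ℂ) z ≠ z := fun h => him (Complex.conj_eq_iff_im.mp h)
      obtain ⟨Q1, hQ1⟩ := dvd_iff_isRoot.mpr hroot
      have hQ1root : Q1.eval ((starRingEnd ℂ) z) = 0 := by
        have h' := hconj
        rw [hQ1, eval_mul, eval_sub, eval_X, eval_C] at h'
        rcases mul_eq_zero.mp h' with h | h
        · exact absurd (sub_eq_zero.mp h) hne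
        · exact h
      have hsd : (X - C z) * (X - C ((starRingEnd ℂ) z)) ∣ Q := by
        rw [hQ1]
        exact mul_dvd_mul_left _ (dvd_iff_isRoot.mpr hQ1root)
      set c : ℝ := 2 * z.re with hc
      set s : Polynomial ℝ := X^2 - C c * X + 1 with hs
      have hzmul : z * (starRingEnd ℂ) z = 1 := by
        rw [Complex.mul_conj, Complex.normSq_eq_norm_sq, habs]
        norm_num
      have hzadd : z + (starRingEnd ℂ) z = ((c : ℝ) : ℂ) := by
        rw [Complex.add_conj]
      have hsmap : s.map (algebraMap ℝ ℂ) = (X - C z) * (X - C ((starRingEnd ℂ) z)) := by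
        have hrhs : (X - C z) * (X - C ((starRingEnd ℂ) z))
            = X^2 - C (z + (starRingEnd ℂ) z) * X + C (z * (starRingEnd ℂ) z) := by
          rw [C_add, C_mul]; ring
        rw [hrhs, hzmul, hzadd, map_one, hs]
        simp only [Polynomial.map_add, Polynomial.map_sub, Polynomial.map_pow,
          Polynomial.map_mul, Polynomial.map_one, map_X, map_C]
        norm_num
      have hdvd : s ∣ q := by
        rw [← map_dvd_map' (algebraMap ℝ ℂ), hsmap]
        exact hsd
      obtain ⟨r, hr⟩ := hdvd
      have hrne : r ≠ 0 := by rintro rfl; rw [mul_zero] at hr; exact hqne hr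
      have hsform : s = C 1 * X^2 + C (-c) * X + C 1 := by
        rw [hs]; simp only [map_neg, map_one]; ring
      have hs2 : s.natDegree = 2 := by rw [hsform]; exact natDegree_quadratic one_ne_zero
      have hsne : s ≠ 0 := fun h => by simp [h] at hs2
      have hn2 : n = 2 + r.natDegree := by
        rw [← hdeg, hr, natDegree_mul hsne hrne, hs2]
      set v : Fin (n+1) → ℝ := fun i => if (i : ℕ) = n then c else r.coeff (i : ℕ) with hv
      refine ⟨v, ?_, ?_⟩
      · show v ⟨n - 1, by omega⟩ = 0
        rw [hv]
        simp only
        rw [if_neg (by omega)]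
        exact coeff_eq_zero_of_natDegree_lt (by omega)
      · funext j
        have hel : ∀ m : ℕ, el n m v = r.coeff m := by
          intro m
          unfold el
          split_ifs with h
          · rw [hv]; simp only; rw [if_neg (by omega)]
          · exact (coeff_eq_zero_of_natDegree_lt (by omega)).symm
        have hvlast : v (Fin.last n) = c := by
          rw [hv]; simp [Fin.last]
        have hcoeff : q.coeff (j : ℕ) = r.coeff (j:ℕ)
            + (if 2 ≤ (j:ℕ) then r.coeff ((j:ℕ) - 2) else 0)
            - (if 1 ≤ (j:ℕ) then c * r.coeff ((j:ℕ) - 1) else 0) := by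
          have hsr : s * r = r * X^2 - C c * (r * X^1) + r := by rw [hs]; ring
          rw [hr, hsr, coeff_add, coeff_sub, coeff_mul_X_pow', coeff_C_mul, coeff_mul_X_pow']
          split_ifs <;> ring
        show Φm n v j = ω j
        unfold Φm
        simp only [hel, hvlast]
        have homega : ω j = q.coeff (j : ℕ) :=
          (coeff_polyOfCoeffs ω (j : ℕ) (by omega)).symm
        rw [homega, hcoeff]
    exact Or.inr hm

end Stmt17

open Stmt17 in
/-- For a random real polynomial of degree `n ≥ 1` with i.i.d. standard normal
coefficients, `P(N⁰(Q) = k) = P(N⁰(Q) = n - k)` for every `0 ≤ k ≤ n`, where `N⁰` counts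
roots of modulus smaller than `1`. -/
theorem stmt_17 (n : ℕ) (hn : 1 ≤ n) (k : ℕ) (hk : k ≤ n) :
    (Measure.pi fun _ : Fin (n + 1) => gaussianReal 0 1)
        {ω | smallRootCount (polyOfCoeffs ω) = k}
      = (Measure.pi fun _ : Fin (n + 1) => gaussianReal 0 1)
        {ω | smallRootCount (polyOfCoeffs ω) = n - k} := by
  classical
  set μ := (Measure.pi fun _ : Fin (n + 1) => gaussianReal 0 1) with hμ
  set Bad : Set (Fin (n+1) → ℝ) :=
    {ω | ω 0 = 0 ∨ ω (Fin.last n) = 0 ∨ ∃ z : ℂ, ‖z‖ = 1 ∧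
      ((polyOfCoeffs ω).map (algebraMap ℝ ℂ)).IsRoot z} with hBadDef
  have hBad : μ Bad = 0 := gauss_pi_ac (n+1) (volume_bad n hn)
  -- the key pointwise identity on the good set
  have hGood : ∀ ω : Fin (n+1) → ℝ, ω ∉ Bad →
      (smallRootCount (reflect n (polyOfCoeffs ω)) = k ↔
        smallRootCount (polyOfCoeffs ω) = n - k) := by
    intro ω hω
    rw [hBadDef, Set.mem_setOf_eq] at hω
    push_neg at hω
    obtain ⟨h0, hlast, hcirc⟩ := hω
    set q := polyOfCoeffs ω with hq
    have hq0 : q.coeff 0 ≠ 0 := by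
      rw [hq, coeff_polyOfCoeffs ω 0 (by omega)]
      exact h0
    have hqn : q.coeff n ≠ 0 := by
      rw [hq, coeff_polyOfCoeffs ω n le_rfl]
      exact hlast
    have hdeg : q.natDegree = n :=
      le_antisymm (natDegree_polyOfCoeffs_le ω) (le_natDegree_of_ne_zero hqn)
    have hcirc' : ∀ z : ℂ, ‖z‖ = 1 → ¬ (q.map (algebraMap ℝ ℂ)).IsRoot z := by
      intro z hz hroot
      exact (hcirc z hz) hroot
    obtain ⟨hrefl, hle⟩ := smallRootCount_reflect hq0 hdeg hcirc'
    rw [hrefl]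
    omega
  -- the measure-preserving reversal
  set e := MeasurableEquiv.piCongrLeft (fun _ : Fin (n+1) => ℝ)
    (Fin.revPerm : Equiv.Perm (Fin (n+1))) with he
  have hmp : MeasurePreserving e μ μ :=
    measurePreserving_piCongrLeft (fun _ : Fin (n+1) => gaussianReal 0 1) Fin.revPerm
  have heval : ∀ (ω : Fin (n+1) → ℝ), e ω = fun j => ω (Fin.rev j) := by
    intro ω
    funext j
    rw [he, MeasurableEquiv.coe_piCongrLeft]
    conv_lhs => rw [show j = Fin.revPerm (Fin.rev j) from (Fin.rev_rev j).symm]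
    rw [Equiv.piCongrLeft_apply_apply]
  have hpre : e ⁻¹' {ω | smallRootCount (polyOfCoeffs ω) = k}
      = {ω | smallRootCount (reflect n (polyOfCoeffs ω)) = k} := by
    ext ω
    simp only [Set.mem_preimage, Set.mem_setOf_eq]
    rw [show polyOfCoeffs (e ω) = reflect n (polyOfCoeffs ω) from by
      rw [heval ω]; exact polyOfCoeffs_rev ω]
  -- splitting off the null set
  have hsplit : ∀ A : Set (Fin (n+1) → ℝ), μ A = μ (A ∩ Badᶜ) := by
    intro A
    refine le_antisymm ?_ (measure_mono Set.inter_subset_left)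
    calc μ A = μ ((A ∩ Bad) ∪ (A ∩ Badᶜ)) := by rw [Set.inter_union_compl A Bad]
      _ ≤ μ (A ∩ Bad) + μ (A ∩ Badᶜ) := measure_union_le _ _
      _ ≤ 0 + μ (A ∩ Badᶜ) := by
          gcongr
          exact le_trans (measure_mono Set.inter_subset_right) hBad.le
      _ = μ (A ∩ Badᶜ) := zero_add _
  have hseteq : {ω | smallRootCount (reflect n (polyOfCoeffs ω)) = k} ∩ Badᶜ
      = {ω | smallRootCount (polyOfCoeffs ω) = n - k} ∩ Badᶜ := by
    ext ω
    simp only [Set.mem_inter_iff, Set.mem_setOf_eq, Set.mem_compl_iff]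
    constructor
    · rintro ⟨h1, h2⟩
      exact ⟨(hGood ω h2).mp h1, h2⟩
    · rintro ⟨h1, h2⟩
      exact ⟨(hGood ω h2).mpr h1, h2⟩
  calc μ {ω | smallRootCount (polyOfCoeffs ω) = k}
      = μ (e ⁻¹' {ω | smallRootCount (polyOfCoeffs ω) = k}) :=
        (hmp.measure_preimage_equiv _).symm
    _ = μ {ω | smallRootCount (reflect n (polyOfCoeffs ω)) = k} := by rw [hpre]
    _ = μ ({ω | smallRootCount (reflect n (polyOfCoeffs ω)) = k} ∩ Badᶜ) := hsplit _
    _ = μ ({ω | smallRootCount (polyOfCoeffs ω) = n - k} ∩ Badᶜ) := by rw [hseteq]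
    _ = μ {ω | smallRootCount (polyOfCoeffs ω) = n - k} := (hsplit _).symm
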